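/- Let n be a positive integer, let x_1,…,x_n be nonnegative real numbers, let a_1,…,a_n and μ_1,…,μ_n be positive real numbers, let 1 < p ≤ 2, and let q satisfy 1/p + 1/q = 1. Set S = Σ_{j=1}^n μ_j^{1/(p-1)}·a_j^q. Then Σ_{i=1}^n x_i^p/μ_i ≤ (Σ_{i=1}^n a_i·x_i)^p / S^{p-1} + (1/S^p)·Σ_{i=1}^n μ_i^{1/(p-1)}·a_i^q·| (1/(a_i·μ_i))^{1/(p-1)}·S·x_i − Σ_{j=1}^n a_j·x_j |^p. -/

import Mathlib

open Finset

private lemma rpow_subadd {r : ℝ} (hr : 0 < r) (hr1 : r ≤ 1) {u v : ℝ}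
    (hu : 0 ≤ u) (hv : 0 ≤ v) : (u + v) ^ r ≤ u ^ r + v ^ r := by
  rcases eq_or_lt_of_le hu with rfl | hu'
  · simp [Real.zero_rpow hr.ne']
  rcases eq_or_lt_of_le hv with rfl | hv'
  · simp [Real.zero_rpow hr.ne']
  have huv : 0 < u + v := by linarith
  have hmul : ∀ w : ℝ, 0 < w → w * w ^ (r - 1) = w ^ r := by
    intro w hw
    nth_rewrite 1 [← Real.rpow_one w]
    rw [← Real.rpow_add hw]
    norm_num
  have h1 : u * (u + v) ^ (r - 1) ≤ u ^ r := by
    have h := Real.rpow_le_rpow_of_nonpos hu' (by linarith : u ≤ u + v)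
      (by linarith : r - 1 ≤ 0)
    calc u * (u + v) ^ (r - 1) ≤ u * u ^ (r - 1) :=
          mul_le_mul_of_nonneg_left h hu
      _ = u ^ r := hmul u hu'
  have h2 : v * (u + v) ^ (r - 1) ≤ v ^ r := by
    have h := Real.rpow_le_rpow_of_nonpos hv' (by linarith : v ≤ u + v)
      (by linarith : r - 1 ≤ 0)
    calc v * (u + v) ^ (r - 1) ≤ v * v ^ (r - 1) :=
          mul_le_mul_of_nonneg_left h hv
      _ = v ^ r := hmul v hv'
  calc (u + v) ^ r = (u + v) * (u + v) ^ (r - 1) := (hmul _ huv).symm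
    _ = u * (u + v) ^ (r - 1) + v * (u + v) ^ (r - 1) := by ring
    _ ≤ u ^ r + v ^ r := add_le_add h1 h2

private lemma key_t {p : ℝ} (hp1 : 1 < p) (hp2 : p ≤ 2) {t : ℝ} (ht : 0 ≤ t) :
    t ^ p ≤ 1 + p * (t - 1) + |t - 1| ^ p := by
  have hp0 : 0 < p := by linarith
  have hpm1 : 0 < p - 1 := by linarith
  rcases le_total 1 t with h | h
  · -- t ≥ 1
    rw [abs_of_nonneg (by linarith : (0:ℝ) ≤ t - 1)]
    set f : ℝ → ℝ := fun s => 1 + p * (s - 1) + (s - 1) ^ p - s ^ p with hf_def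
    have hder : ∀ s : ℝ, HasDerivAt f
        (p * 1 + 1 * p * (s - 1) ^ (p - 1) - p * s ^ (p - 1)) s := by
      intro s
      have h1 : HasDerivAt (fun s : ℝ => (s - 1) ^ p) (1 * p * (s - 1) ^ (p - 1)) s :=
        ((hasDerivAt_id s).sub_const 1).rpow_const (Or.inr hp1.le)
      have h2 : HasDerivAt (fun s : ℝ => s ^ p) (p * s ^ (p - 1)) s :=
        Real.hasDerivAt_rpow_const (Or.inr hp1.le)
      have h3 : HasDerivAt (fun s : ℝ => 1 + p * (s - 1)) (p * 1) s :=
        (((hasDerivAt_id s).sub_const 1).const_mul p).const_add 1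
      exact (h3.add h1).sub h2
    have mono : MonotoneOn f (Set.Ici 1) := by
      apply monotoneOn_of_hasDerivWithinAt_nonneg (convex_Ici (1:ℝ))
        (f' := fun s => p * 1 + 1 * p * (s - 1) ^ (p - 1) - p * s ^ (p - 1))
      · exact fun s _ => (hder s).continuousAt.continuousWithinAt
      · exact fun s hs => (hder s).hasDerivWithinAt
      · intro s hs
        rw [interior_Ici] at hs
        have hs1 : (1:ℝ) < s := hs
        have hsub : s ^ (p - 1) ≤ (s - 1) ^ (p - 1) + 1 := by
          have h := rpow_subadd hpm1 (by linarith) (u := s - 1) (v := 1)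
            (by linarith) zero_le_one
          rw [Real.one_rpow] at h
          calc s ^ (p - 1) = (s - 1 + 1) ^ (p - 1) := by ring_nf
            _ ≤ (s - 1) ^ (p - 1) + 1 := h
        nlinarith [mul_le_mul_of_nonneg_left hsub hp0.le]
    have h01 : f 1 ≤ f t := mono (by simp) (by exact h) h
    have hf1 : f 1 = 0 := by
      simp [hf_def, Real.zero_rpow hp0.ne', Real.one_rpow]
    simp only [hf_def] at h01 hf1
    linarith
  · -- 0 ≤ t ≤ 1
    rw [abs_of_nonpos (by linarith : t - 1 ≤ 0), neg_sub]
    set g : ℝ → ℝ := fun s => 1 + p * (s - 1) + (1 - s) ^ p - s ^ p with hg_def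
    have hder : ∀ s : ℝ, HasDerivAt g
        (p * 1 + (0 - 1) * p * (1 - s) ^ (p - 1) - p * s ^ (p - 1)) s := by
      intro s
      have h1 : HasDerivAt (fun s : ℝ => (1 - s) ^ p) ((0 - 1) * p * (1 - s) ^ (p - 1)) s :=
        ((hasDerivAt_const s (1:ℝ)).sub (hasDerivAt_id s)).rpow_const (Or.inr hp1.le)
      have h2 : HasDerivAt (fun s : ℝ => s ^ p) (p * s ^ (p - 1)) s :=
        Real.hasDerivAt_rpow_const (Or.inr hp1.le)
      have h3 : HasDerivAt (fun s : ℝ => 1 + p * (s - 1)) (p * 1) s :=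
        (((hasDerivAt_id s).sub_const 1).const_mul p).const_add 1
      exact (h3.add h1).sub h2
    have anti : AntitoneOn g (Set.Icc 0 1) := by
      apply antitoneOn_of_hasDerivWithinAt_nonpos (convex_Icc (0:ℝ) 1)
        (f' := fun s => p * 1 + (0 - 1) * p * (1 - s) ^ (p - 1) - p * s ^ (p - 1))
      · exact fun s _ => (hder s).continuousAt.continuousWithinAt
      · exact fun s hs => (hder s).hasDerivWithinAt
      · intro s hs
        rw [interior_Icc] at hs
        obtain ⟨hs0, hs1⟩ := hs
        have e1 : s ^ (1:ℝ) ≤ s ^ (p - 1) :=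
          Real.rpow_le_rpow_of_exponent_ge hs0 hs1.le (by linarith)
        have e2 : (1 - s) ^ (1:ℝ) ≤ (1 - s) ^ (p - 1) :=
          Real.rpow_le_rpow_of_exponent_ge (by linarith) (by linarith) (by linarith)
        rw [Real.rpow_one] at e1 e2
        nlinarith [mul_le_mul_of_nonneg_left e1 hp0.le,
          mul_le_mul_of_nonneg_left e2 hp0.le]
    have h01 : g 1 ≤ g t := anti (Set.mem_Icc.mpr ⟨ht, h⟩) (Set.mem_Icc.mpr ⟨zero_le_one, le_refl 1⟩) h
    have hg1 : g 1 = 0 := by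
      simp [hg_def, Real.zero_rpow hp0.ne', Real.one_rpow]
    simp only [hg_def] at h01 hg1
    linarith

private lemma key_uv {p : ℝ} (hp1 : 1 < p) (hp2 : p ≤ 2) {u v : ℝ}
    (hu : 0 ≤ u) (hv : 0 ≤ v) :
    u ^ p ≤ v ^ p + p * v ^ (p - 1) * (u - v) + |u - v| ^ p := by
  have hp0 : 0 < p := by linarith
  rcases eq_or_lt_of_le hv with rfl | hv'
  · simp [Real.zero_rpow hp0.ne', Real.zero_rpow (by linarith : p - 1 ≠ 0),
      abs_of_nonneg hu]
  · have ht := key_t hp1 hp2 (t := u / v) (div_nonneg hu hv'.le)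
    have hvp : (0:ℝ) < v ^ p := Real.rpow_pos_of_pos hv' p
    have h1 : (u / v) ^ p * v ^ p = u ^ p := by
      rw [← Real.mul_rpow (by positivity) hv'.le, div_mul_cancel₀ _ hv'.ne']
    have h4 : (u / v - 1) * v = u - v := by field_simp
    have h2 : |u / v - 1| ^ p * v ^ p = |u - v| ^ p := by
      rw [← Real.mul_rpow (abs_nonneg _) hv'.le]
      congr 1
      calc |u / v - 1| * v = |u / v - 1| * |v| := by rw [abs_of_pos hv']
        _ = |(u / v - 1) * v| := (abs_mul _ _).symm
        _ = |u - v| := by rw [h4]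
    have h3 : v ^ p = v ^ (p - 1) * v := by
      rw [← Real.rpow_add_one hv'.ne' (p - 1), sub_add_cancel]
    calc u ^ p = (u / v) ^ p * v ^ p := h1.symm
      _ ≤ (1 + p * (u / v - 1) + |u / v - 1| ^ p) * v ^ p :=
          mul_le_mul_of_nonneg_right ht hvp.le
      _ = v ^ p + p * v ^ (p - 1) * (u - v) + |u - v| ^ p := by
          rw [← h2, ← h4, h3]; ring

open Finset in
/-- Theorem 3 (reverse case): subquadratic reverse of the refined n-term Bohr type
inequality for 1 < p ≤ 2. -/
theorem euler_lagrange_subquadratic (n : ℕ) (hn : 0 < n) (x : Fin n → ℝ)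
    (hx : ∀ i, 0 ≤ x i) (a μ : Fin n → ℝ) (ha : ∀ i, 0 < a i) (hμ : ∀ i, 0 < μ i)
    (p q : ℝ) (hp1 : 1 < p) (hp2 : p ≤ 2) (hpq : 1 / p + 1 / q = 1)
    (S : ℝ) (hS : S = ∑ j, μ j ^ (1 / (p - 1)) * a j ^ q) :
    ∑ i, x i ^ p / μ i ≤ (∑ i, a i * x i) ^ p / S ^ (p - 1) +
      (1 / S ^ p) * ∑ i, μ i ^ (1 / (p - 1)) * a i ^ q *
        |(1 / (a i * μ i)) ^ (1 / (p - 1)) * S * x i - ∑ j, a j * x j| ^ p := by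
  have hp0 : 0 < p := by linarith
  have hpm1 : 0 < p - 1 := by linarith
  have hq0 : q ≠ 0 := by
    intro h
    rw [h, div_zero, add_zero] at hpq
    have : p = 1 := by field_simp at hpq; linarith
    linarith
  have hq : q = p / (p - 1) := by
    field_simp at hpq ⊢
    nlinarith [hpq]
  set r : ℝ := 1 / (p - 1) with hr_def
  set w : Fin n → ℝ := fun i => μ i ^ r * a i ^ q with hw_def
  set c : Fin n → ℝ := fun i => (1 / (a i * μ i)) ^ r with hc_def
  have hw : ∀ i, 0 < w i := fun i =>
    mul_pos (Real.rpow_pos_of_pos (hμ i) r) (Real.rpow_pos_of_pos (ha i) q)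
  have hc : ∀ i, 0 < c i := fun i =>
    Real.rpow_pos_of_pos (one_div_pos.mpr (mul_pos (ha i) (hμ i))) r
  have hSpos : 0 < S := by
    rw [hS]
    apply Finset.sum_pos (fun i _ =>
      mul_pos (Real.rpow_pos_of_pos (hμ i) _) (Real.rpow_pos_of_pos (ha i) q))
    exact ⟨⟨0, hn⟩, mem_univ _⟩
  have hc_eq : ∀ i, c i = a i ^ (-r) * μ i ^ (-r) := by
    intro i
    simp only [hc_def]
    rw [one_div, Real.inv_rpow (mul_pos (ha i) (hμ i)).le, Real.mul_rpow (ha i).le (hμ i).le,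
      mul_inv, ← Real.rpow_neg (ha i).le, ← Real.rpow_neg (hμ i).le]
  have hqr : q + -r = 1 := by
    rw [hq, hr_def]; field_simp; ring
  have hA : ∀ i, w i * c i = a i := by
    intro i
    rw [hc_eq i]
    simp only [hw_def]
    rw [show μ i ^ r * a i ^ q * (a i ^ (-r) * μ i ^ (-r))
        = (μ i ^ r * μ i ^ (-r)) * (a i ^ q * a i ^ (-r)) from by ring,
      ← Real.rpow_add (hμ i), ← Real.rpow_add (ha i), hqr,
      show r + -r = 0 from by ring]
    simp
  have hB : ∀ i, w i * c i ^ p = (μ i)⁻¹ := by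
    intro i
    rw [hc_eq i]
    simp only [hw_def]
    rw [Real.mul_rpow (Real.rpow_nonneg (ha i).le _) (Real.rpow_nonneg (hμ i).le _),
      ← Real.rpow_mul (ha i).le, ← Real.rpow_mul (hμ i).le,
      show μ i ^ r * a i ^ q * (a i ^ (-r * p) * μ i ^ (-r * p))
        = (μ i ^ r * μ i ^ (-r * p)) * (a i ^ q * a i ^ (-r * p)) from by ring,
      ← Real.rpow_add (hμ i), ← Real.rpow_add (ha i),
      show q + -r * p = 0 from by rw [hq, hr_def]; field_simp; ring,
      show r + -r * p = -1 from by rw [hr_def]; field_simp; ring]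
    rw [Real.rpow_zero, mul_one, Real.rpow_neg_one]
  set T : ℝ := ∑ j, a j * x j with hT_def
  have hT : 0 ≤ T := Finset.sum_nonneg fun i _ => mul_nonneg (ha i).le (hx i)
  set v : ℝ := T / S with hv_def
  have hv : 0 ≤ v := div_nonneg hT hSpos.le
  clear_value v T c w r
  have hSp : S ^ p = S ^ (p - 1) * S := by
    rw [← Real.rpow_add_one hSpos.ne' (p - 1), sub_add_cancel]
  -- rewrite LHS
  have LHSeq : ∑ i, x i ^ p / μ i = ∑ i, w i * (c i * x i) ^ p := by
    refine Finset.sum_congr rfl fun i _ => ?_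
    rw [Real.mul_rpow (hc i).le (hx i), show w i * (c i ^ p * x i ^ p)
      = (w i * c i ^ p) * x i ^ p from by ring, hB i]
    rw [inv_mul_eq_div]
  -- rewrite first RHS term
  have RHS1 : T ^ p / S ^ (p - 1) = S * v ^ p := by
    rw [hv_def, Real.div_rpow hT hSpos.le, hSp]
    field_simp
  -- rewrite second RHS term
  have RHS2 : (1 / S ^ p) * ∑ i, w i * |c i * S * x i - T| ^ p
      = ∑ i, w i * |c i * x i - v| ^ p := by
    rw [Finset.mul_sum]
    refine Finset.sum_congr rfl fun i _ => ?_
    have habs : |c i * x i - v| = |c i * S * x i - T| / S := by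
      rw [hv_def, show c i * x i - T / S = (c i * S * x i - T) / S from by
        field_simp]
      rw [abs_div, abs_of_pos hSpos]
    rw [habs, Real.div_rpow (abs_nonneg _) hSpos.le]
    ring
  -- main inequality
  have main : ∑ i, w i * (c i * x i) ^ p
      ≤ S * v ^ p + ∑ i, w i * |c i * x i - v| ^ p := by
    have step : ∑ i, w i * (c i * x i) ^ p
        ≤ ∑ i, (w i * (v ^ p + p * v ^ (p - 1) * (c i * x i - v))
            + w i * |c i * x i - v| ^ p) := by
      refine Finset.sum_le_sum fun i _ => ?_
      have h := key_uv hp1 hp2 (mul_nonneg (hc i).le (hx i)) hv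
      calc w i * (c i * x i) ^ p
          ≤ w i * (v ^ p + p * v ^ (p - 1) * (c i * x i - v)
              + |c i * x i - v| ^ p) := mul_le_mul_of_nonneg_left h (hw i).le
        _ = w i * (v ^ p + p * v ^ (p - 1) * (c i * x i - v))
              + w i * |c i * x i - v| ^ p := by ring
    refine step.trans (le_of_eq ?_)
    rw [Finset.sum_add_distrib]
    congr 1
    have hsumw : ∑ i, w i = S := by
      rw [hS]
    have e1 : ∀ i ∈ univ, w i * (v ^ p + p * v ^ (p - 1) * (c i * x i - v))
        = v ^ p * w i + (p * v ^ (p - 1)) * (a i * x i)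
          - (p * v ^ (p - 1) * v) * w i := fun i _ => by
      rw [← hA i]; ring
    rw [Finset.sum_congr rfl e1, Finset.sum_sub_distrib, Finset.sum_add_distrib,
      ← Finset.mul_sum, ← Finset.mul_sum, ← Finset.mul_sum, ← hT_def, hsumw]
    have hSv : S * v = T := by rw [hv_def]; field_simp
    linear_combination (-(p * v ^ (p - 1))) * hSv
  -- assemble
  rw [LHSeq]
  have goalsum : ∑ i, μ i ^ r * a i ^ q *
      |(1 / (a i * μ i)) ^ r * S * x i - T| ^ p
      = ∑ i, w i * |c i * S * x i - T| ^ p := by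
    simp only [hw_def, hc_def]
  rw [goalsum, RHS1, RHS2]
  exact main
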